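/- Let V be a 6-dimensional real vector space and ω an alternating 3-form on V with Δ(ω) = {0}. Fix a nonzero alternating 6-form θ on V and let Q : V → V be the unique linear map with (ι_vω)∧ω = ι_{Q(v)}θ for all v ∈ V. Then for every v ∈ V one has (ι_vω)∧(ι_{Q(v)}ω) = 0. -/

import Mathlib

open scoped TensorProduct

/-- The wedge product of real-valued alternating forms
(antisymmetrized shuffle-sum convention, via `AlternatingMap.domCoprod`). -/
noncomputable def wedge {V : Type*} [AddCommGroup V] [Module ℝ V] {p q : ℕ}
    (α : V [⋀^Fin p]→ₗ[ℝ] ℝ) (β : V [⋀^Fin q]→ₗ[ℝ] ℝ) : V [⋀^Fin (p + q)]→ₗ[ℝ] ℝ :=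
  ((LinearMap.mul' ℝ ℝ).compAlternatingMap (α.domCoprod β)).domDomCongr finSumFinEquiv

/-- The interior product `ι_v ω = ω(v, ·, …, ·)`. -/
noncomputable def iota {V : Type*} [AddCommGroup V] [Module ℝ V] {n : ℕ}
    (v : V) (ω : V [⋀^Fin (n + 1)]→ₗ[ℝ] ℝ) : V [⋀^Fin n]→ₗ[ℝ] ℝ :=
  ω.curryLeft v

/-- `Δ(ω) = {v ∈ V : (ι_v ω) ∧ (ι_v ω) = 0}` for a 3-form `ω`. -/
noncomputable def Delta {V : Type*} [AddCommGroup V] [Module ℝ V]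
    (ω : V [⋀^Fin 3]→ₗ[ℝ] ℝ) : Set V :=
  {v | wedge (iota v ω) (iota v ω) = 0}

/-- A form is multisymplectic iff `v ↦ ι_v ω` is injective. -/
noncomputable def Multisymplectic {V : Type*} [AddCommGroup V] [Module ℝ V] {n : ℕ}
    (ω : V [⋀^Fin (n + 1)]→ₗ[ℝ] ℝ) : Prop :=
  Function.Injective fun v : V => iota v ω


section Helpers

variable {V : Type*} [AddCommGroup V] [Module ℝ V]

private theorem wedge_eval {p q : ℕ} (α : V [⋀^Fin p]→ₗ[ℝ] ℝ) (β : V [⋀^Fin q]→ₗ[ℝ] ℝ)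
    (x : Fin (p + q) → V) :
    (p.factorial * q.factorial : ℕ) • wedge α β x
      = ∑ σ : Equiv.Perm (Fin (p + q)),
          (Equiv.Perm.sign σ : ℤ) • (α (fun i => x (σ (Fin.castAdd q i))) *
            β (fun i => x (σ (Fin.natAdd p i)))) := by
  have h := MultilinearMap.domCoprod_alternization_eq (α : V [⋀^Fin p]→ₗ[ℝ] ℝ)
    (β : V [⋀^Fin q]→ₗ[ℝ] ℝ)
  have h2 := congrArg (fun f : V [⋀^Fin p ⊕ Fin q]→ₗ[ℝ] ℝ ⊗[ℝ] ℝ =>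
      (LinearMap.mul' ℝ ℝ) (f (fun j => x (finSumFinEquiv j)))) h.symm
  simp only [Fintype.card_fin] at h2
  have hl : wedge α β x
      = (LinearMap.mul' ℝ ℝ) ((α.domCoprod β) (fun j => x (finSumFinEquiv j))) := rfl
  rw [AlternatingMap.smul_apply, map_nsmul] at h2
  rw [hl, h2, MultilinearMap.alternatization_apply]
  rw [map_sum (LinearMap.mul' ℝ ℝ) (fun σ : Equiv.Perm (Fin p ⊕ Fin q) =>
    Equiv.Perm.sign σ • (MultilinearMap.domDomCongr σ
      ((↑α : MultilinearMap ℝ (fun _ : Fin p => V) ℝ).domCoprod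
        (↑β : MultilinearMap ℝ (fun _ : Fin q => V) ℝ))) fun j => x (finSumFinEquiv j))
    Finset.univ]
  refine Fintype.sum_equiv (Equiv.permCongr finSumFinEquiv) _ _ fun σ => ?_
  rw [Units.smul_def, map_zsmul]
  congr 1
  · simp [Equiv.Perm.sign_permCongr]
  · simp only [MultilinearMap.domDomCongr_apply, MultilinearMap.domCoprod_apply,
      LinearMap.mul'_apply, AlternatingMap.coe_multilinearMap]
    refine congrArg₂ (· * ·) ?_ ?_ <;> refine congrArg _ (funext fun i => ?_) <;>
      simp [Equiv.permCongr_apply]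

private theorem wedge22sum (α β : V [⋀^Fin 2]→ₗ[ℝ] ℝ) (x : Fin (2+2) → V) :
    (4:ℝ) * wedge α β x = ∑ σ : Equiv.Perm (Fin 4),
      (Equiv.Perm.sign σ : ℤ) * (α ![x (σ 0), x (σ 1)] * β ![x (σ 2), x (σ 3)]) := by
  have h := wedge_eval α β x
  norm_num [Nat.factorial] at h
  rw [h]
  refine Finset.sum_congr rfl fun σ _ => ?_
  push_cast
  refine congrArg₂ (· * ·) rfl (congrArg₂ (· * ·) (congrArg _ (funext fun i => ?_))
    (congrArg _ (funext fun i => ?_))) <;> fin_cases i <;> rfl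

private theorem wedge23sum (α : V [⋀^Fin 2]→ₗ[ℝ] ℝ) (β : V [⋀^Fin 3]→ₗ[ℝ] ℝ)
    (x : Fin (2+3) → V) :
    (12:ℝ) * wedge α β x = ∑ σ : Equiv.Perm (Fin 5),
      (Equiv.Perm.sign σ : ℤ) * (α ![x (σ 0), x (σ 1)] * β ![x (σ 2), x (σ 3), x (σ 4)]) := by
  have h := wedge_eval α β x
  norm_num [Nat.factorial] at h
  rw [h]
  refine Finset.sum_congr rfl fun σ _ => ?_
  push_cast
  refine congrArg₂ (· * ·) rfl (congrArg₂ (· * ·) (congrArg _ (funext fun i => ?_))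
    (congrArg _ (funext fun i => ?_))) <;> fin_cases i <;> rfl

private theorem sw2 (γ : V [⋀^Fin 2]→ₗ[ℝ] ℝ) (u w : V) : γ ![w, u] = -γ ![u, w] := by
  have h := γ.map_swap ![u, w] (show (0:Fin 2) ≠ 1 by decide)
  rw [show (![u, w] ∘ Equiv.swap (0:Fin 2) 1) = ![w, u] from funext fun i => by
    fin_cases i <;> simp] at h
  exact h

private theorem sw3a (γ : V [⋀^Fin 3]→ₗ[ℝ] ℝ) (u v w : V) : γ ![v, u, w] = -γ ![u, v, w] := by
  have h := γ.map_swap ![u, v, w] (show (0:Fin 3) ≠ 1 by decide)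
  rw [show (![u, v, w] ∘ Equiv.swap (0:Fin 3) 1) = ![v, u, w] from funext fun i => by
    fin_cases i <;> simp [Equiv.swap_apply_def] <;> rfl] at h
  exact h

private theorem sw3b (γ : V [⋀^Fin 3]→ₗ[ℝ] ℝ) (u v w : V) : γ ![u, w, v] = -γ ![u, v, w] := by
  have h := γ.map_swap ![u, v, w] (show (1:Fin 3) ≠ 2 by decide)
  rw [show (![u, v, w] ∘ Equiv.swap (1:Fin 3) 2) = ![u, w, v] from funext fun i => by
    fin_cases i <;> simp [Equiv.swap_apply_def] <;> rfl] at h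
  exact h

private theorem sw3c (γ : V [⋀^Fin 3]→ₗ[ℝ] ℝ) (u v w : V) : γ ![w, v, u] = -γ ![u, v, w] := by
  have h := γ.map_swap ![u, v, w] (show (0:Fin 3) ≠ 2 by decide)
  rw [show (![u, v, w] ∘ Equiv.swap (0:Fin 3) 2) = ![w, v, u] from funext fun i => by
    fin_cases i <;> simp [Equiv.swap_apply_def] <;> rfl] at h
  exact h

private theorem sw3d (γ : V [⋀^Fin 3]→ₗ[ℝ] ℝ) (u v w : V) : γ ![v, w, u] = γ ![u, v, w] := by
  rw [sw3a, sw3c, neg_neg]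

private theorem sw3e (γ : V [⋀^Fin 3]→ₗ[ℝ] ℝ) (u v w : V) : γ ![w, u, v] = γ ![u, v, w] := by
  rw [sw3a, sw3b, neg_neg]

private theorem eta4 (x : Fin 4 → V) : x = ![x 0, x 1, x 2, x 3] := by
  funext i; fin_cases i <;> rfl

set_option maxHeartbeats 1000000 in
set_option maxRecDepth 20000 in
private theorem wedge22f (α β : V [⋀^Fin 2]→ₗ[ℝ] ℝ) (a b c d : V) :
    wedge α β ![a, b, c, d] =
      α ![a, b] * β ![c, d]
      - α ![a, c] * β ![b, d]
      + α ![a, d] * β ![b, c]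
      + α ![b, c] * β ![a, d]
      - α ![b, d] * β ![a, c]
      + α ![c, d] * β ![a, b] := by
  have h := wedge22sum α β ![a,b,c,d]
  simp only [show (3:Fin 4) = Fin.succ 2 from rfl, show (2:Fin 4) = Fin.succ 1 from rfl,
    show (1:Fin 4) = Fin.succ 0 from rfl, show (2:Fin 3) = Fin.succ 1 from rfl,
    show (1:Fin 3) = Fin.succ 0 from rfl, show (1:Fin 2) = Fin.succ 0 from rfl] at h
  simp only [Finset.univ_perm_fin_succ, Finset.sum_map, Fintype.sum_prod_type,
    Fin.sum_univ_succ, Equiv.coe_toEmbedding, Equiv.Perm.decomposeFin.symm_sign,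
    Equiv.Perm.decomposeFin_symm_apply_zero, Equiv.Perm.decomposeFin_symm_apply_succ,
    Finset.univ_unique, Finset.sum_singleton, Fin.sum_univ_zero, Finset.sum_const,
    Equiv.Perm.one_apply] at h
  simp (config := { decide := true }) only [Equiv.swap_apply_def, Fin.succ] at h
  simp (config := { decide := true }) [Equiv.swap_apply_def, Matrix.cons_val_zero,
    Matrix.cons_val_one, Matrix.head_cons] at h
  simp only [sw2 α a b, sw2 α a c, sw2 α a d, sw2 α b c, sw2 α b d, sw2 α c d, sw2 β a b, sw2 β a c, sw2 β a d, sw2 β b c, sw2 β b d, sw2 β c d] at h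
  linear_combination h / 4

set_option maxHeartbeats 4000000 in
set_option maxRecDepth 40000 in
private theorem wedge23f (α : V [⋀^Fin 2]→ₗ[ℝ] ℝ) (β : V [⋀^Fin 3]→ₗ[ℝ] ℝ) (a b c d e : V) :
    wedge α β ![a, b, c, d, e] =
      α ![a, b] * β ![c, d, e]
      - α ![a, c] * β ![b, d, e]
      + α ![a, d] * β ![b, c, e]
      - α ![a, e] * β ![b, c, d]
      + α ![b, c] * β ![a, d, e]
      - α ![b, d] * β ![a, c, e]
      + α ![b, e] * β ![a, c, d]
      + α ![c, d] * β ![a, b, e]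
      - α ![c, e] * β ![a, b, d]
      + α ![d, e] * β ![a, b, c] := by
  have h := wedge23sum α β ![a,b,c,d,e]
  simp only [show (4:Fin 5) = Fin.succ 3 from rfl, show (3:Fin 5) = Fin.succ 2 from rfl,
    show (2:Fin 5) = Fin.succ 1 from rfl, show (1:Fin 5) = Fin.succ 0 from rfl,
    show (3:Fin 4) = Fin.succ 2 from rfl, show (2:Fin 4) = Fin.succ 1 from rfl,
    show (1:Fin 4) = Fin.succ 0 from rfl, show (2:Fin 3) = Fin.succ 1 from rfl,
    show (1:Fin 3) = Fin.succ 0 from rfl, show (1:Fin 2) = Fin.succ 0 from rfl] at h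
  simp only [Finset.univ_perm_fin_succ, Finset.sum_map, Fintype.sum_prod_type,
    Fin.sum_univ_succ, Equiv.coe_toEmbedding, Equiv.Perm.decomposeFin.symm_sign,
    Equiv.Perm.decomposeFin_symm_apply_zero, Equiv.Perm.decomposeFin_symm_apply_succ,
    Finset.univ_unique, Finset.sum_singleton, Fin.sum_univ_zero, Finset.sum_const,
    Equiv.Perm.one_apply] at h
  simp (config := { decide := true }) only [Equiv.swap_apply_def, Fin.succ] at h
  simp (config := { decide := true }) [Equiv.swap_apply_def, Matrix.cons_val_zero,
    Matrix.cons_val_one, Matrix.head_cons] at h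
  simp only [sw2 α a b, sw2 α a c, sw2 α a d, sw2 α a e, sw2 α b c, sw2 α b d, sw2 α b e, sw2 α c d, sw2 α c e, sw2 α d e] at h
  simp only [sw3a β a b c, sw3b β a b c, sw3c β a b c, sw3d β a b c, sw3e β a b c, sw3a β a b d, sw3b β a b d, sw3c β a b d, sw3d β a b d, sw3e β a b d, sw3a β a b e, sw3b β a b e, sw3c β a b e, sw3d β a b e, sw3e β a b e, sw3a β a c d, sw3b β a c d, sw3c β a c d, sw3d β a c d, sw3e β a c d, sw3a β a c e, sw3b β a c e, sw3c β a c e, sw3d β a c e, sw3e β a c e, sw3a β a d e, sw3b β a d e, sw3c β a d e, sw3d β a d e, sw3e β a d e, sw3a β b c d, sw3b β b c d, sw3c β b c d, sw3d β b c d, sw3e β b c d, sw3a β b c e, sw3b β b c e, sw3c β b c e, sw3d β b c e, sw3e β b c e, sw3a β b d e, sw3b β b d e, sw3c β b d e, sw3d β b d e, sw3e β b d e, sw3a β c d e, sw3b β c d e, sw3c β c d e, sw3d β c d e, sw3e β c d e] at h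
  linear_combination h / 12

end Helpers

/-- **Lemma 5.** If `Δ(ω) = {0}`, then for every `v` one has `(ι_v ω) ∧ (ι_{Q v} ω) = 0`. -/
theorem wedge_iota_v_iota_Qv_eq_zero
    {V : Type*} [AddCommGroup V] [Module ℝ V] [FiniteDimensional ℝ V]
    (hV : Module.finrank ℝ V = 6)
    (ω : V [⋀^Fin 3]→ₗ[ℝ] ℝ) (hΔ : Delta ω = {0})
    (θ : V [⋀^Fin 6]→ₗ[ℝ] ℝ) (hθ : θ ≠ 0)
    (Q : V →ₗ[ℝ] V) (hQ : ∀ v : V, wedge (iota v ω) ω = iota (Q v) θ) :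
    ∀ v : V, wedge (iota v ω) (iota (Q v) ω) = 0 := by
  intro v
  have hiota : ∀ (u s t : V), iota u ω ![s, t] = ω ![u, s, t] := fun _ _ _ => rfl
  by_cases hv : v = 0
  · subst hv
    have h0 : iota (0:V) ω = 0 := by
      show ω.curryLeft 0 = 0
      exact map_zero _
    rw [h0]
    ext x
    rw [show x = ![x 0, x 1, x 2, x 3] from eta4 x, wedge22f]
    simp
  · -- v ≠ 0
    have hmem : v ∉ Delta ω := by rw [hΔ]; simpa using hv
    obtain ⟨y, hy⟩ : ∃ y : Fin (2+2) → V, wedge (iota v ω) (iota v ω) y ≠ 0 := by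
      by_contra hcon
      push_neg at hcon
      exact hmem (AlternatingMap.ext fun y => by simpa using hcon y)
    have hyv : wedge (iota v ω) (iota v ω) ![y 0, y 1, y 2, y 3] ≠ 0 := by
      rw [← eta4 y]; exact hy
    have hz : ∀ s : V, ω ![v, v, s] = 0 := fun s =>
      ω.map_eq_zero_of_eq _ (show (![v, v, s]) 0 = (![v, v, s]) 1 from rfl) (by decide)
    -- key relation E2
    have hE2 : ∀ x1 x2 x3 : V,
        ω ![v, Q v, x1] * ω ![v, x2, x3] - ω ![v, Q v, x2] * ω ![v, x1, x3]
          + ω ![v, Q v, x3] * ω ![v, x1, x2] = 0 := by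
      intro x1 x2 x3
      have h := congrArg (fun f : V [⋀^Fin (2+3)]→ₗ[ℝ] ℝ => f ![v, Q v, x1, x2, x3]) (hQ v)
      rw [wedge23f] at h
      have hθ0 : iota (Q v) θ ![v, Q v, x1, x2, x3] = 0 :=
        θ.map_eq_zero_of_eq _
          (show (![Q v, v, Q v, x1, x2, x3]) 0 = (![Q v, v, Q v, x1, x2, x3]) 2 from rfl)
          (by decide)
      rw [hθ0] at h
      simp only [hiota, hz, zero_mul, mul_zero, add_zero, zero_add, neg_zero, sub_zero,
        zero_sub] at h
      linear_combination h / 2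
    -- A = 0
    have hA : ∀ t : V, ω ![v, Q v, t] = 0 := by
      by_contra hcon
      push_neg at hcon
      obtain ⟨t0, ht0⟩ := hcon
      have hP : ∀ s t : V, ω ![v, s, t] =
          ω ![v, Q v, s] * (ω ![v, t0, t] / ω ![v, Q v, t0])
            - ω ![v, Q v, t] * (ω ![v, t0, s] / ω ![v, Q v, t0]) := by
        intro s t
        field_simp
        linear_combination hE2 t0 s t
      apply hyv
      rw [wedge22f]
      simp only [hiota]
      rw [hP (y 0) (y 1), hP (y 2) (y 3), hP (y 0) (y 2), hP (y 1) (y 3), hP (y 0) (y 3),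
        hP (y 1) (y 2)]
      ring
    -- finish
    ext x
    rw [show x = ![x 0, x 1, x 2, x 3] from eta4 x, wedge22f]
    simp only [hiota, AlternatingMap.zero_apply]
    have h := congrArg (fun f : V [⋀^Fin (2+3)]→ₗ[ℝ] ℝ => f ![Q v, x 0, x 1, x 2, x 3]) (hQ v)
    rw [wedge23f] at h
    have hθ0 : iota (Q v) θ ![Q v, x 0, x 1, x 2, x 3] = 0 :=
      θ.map_eq_zero_of_eq _
        (show (![Q v, Q v, x 0, x 1, x 2, x 3]) 0 = (![Q v, Q v, x 0, x 1, x 2, x 3]) 1 from rfl)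
        (by decide)
    rw [hθ0] at h
    simp only [hiota, hA, zero_mul, mul_zero, add_zero, zero_add, neg_zero, sub_zero,
      zero_sub] at h
    linear_combination h
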